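/- Let k ≥ 1 and m ≥ 2k+1 be natural numbers, let F be a nonempty set of unordered pairs of distinct vertices of Fin m with at most k elements, let G = ⊤ \ F be the complete graph on Fin m with the edges in F deleted, and let R be the set of vertices of Fin m that do not belong to any pair in F. Then every maximal clique of G contains a vertex in R and a vertex not in R. -/

import Mathlib

/-- A set of vertices is a maximal clique if it is a clique and no strict
superset of it is a clique. -/
def IsMaximalClique {V : Type*} (G : SimpleGraph V) (s : Set V) : Prop :=
  G.IsClique s ∧ ∀ t : Set V, G.IsClique t → s ⊆ t → s = t

/-- A set of vertices is monochromatic under a 2-coloring `c` if `c` is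
constant on it. -/
def MonochromaticOn {V : Type*} (c : V → Bool) (s : Set V) : Prop :=
  ∀ u ∈ s, ∀ v ∈ s, c u = c v

/-- `G` is 2-clique-colorable if some 2-coloring makes every maximal clique
with at least two vertices nonmonochromatic. -/
def TwoCliqueColorable {V : Type*} (G : SimpleGraph V) : Prop :=
  ∃ c : V → Bool, ∀ s : Set V, IsMaximalClique G s →
    (∃ u ∈ s, ∃ v ∈ s, u ≠ v) → ¬ MonochromaticOn c s

/-- A graph `G` satisfies a signed edge condition `((u, v), sign)` if `u` and
`v` are adjacent when the sign is `true`, and nonadjacent when it is `false`. -/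
def SatisfiesCond {m : ℕ} (G : SimpleGraph (Fin m)) (c : (Fin m × Fin m) × Bool) : Prop :=
  if c.2 = true then G.Adj c.1.1 c.1.2 else ¬ G.Adj c.1.1 c.1.2

lemma card_filter_mem_sym2 {m : ℕ} (e : Sym2 (Fin m)) :
    (Finset.univ.filter (· ∈ e)).card ≤ 2 := by
  induction e using Sym2.ind with
  | _ a b =>
    have : Finset.univ.filter (· ∈ s(a, b)) ⊆ {a, b} := by
      intro x hx
      simp only [Finset.mem_filter, Sym2.mem_iff] at hx
      simp [hx.2]
    calc (Finset.univ.filter (· ∈ s(a, b))).card ≤ ({a, b} : Finset (Fin m)).card :=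
          Finset.card_le_card this
      _ ≤ 2 := Finset.card_insert_le a {b} |>.trans (by simp)

/-- In the complete graph on ≥ 2k+1 vertices minus a nonempty set F of at
most k edges, every maximal clique meets both the set R of vertices untouched
by F and its complement. -/
theorem maximalClique_meets_untouched (k m : ℕ) (hk : 1 ≤ k)
    (hm : 2 * k + 1 ≤ m) (F : Set (Sym2 (Fin m)))
    (hF : ∀ e ∈ F, ¬ e.IsDiag) (hcard : F.ncard ≤ k) (hne : F.Nonempty) :
    ∀ s : Set (Fin m),
      IsMaximalClique ((⊤ : SimpleGraph (Fin m)).deleteEdges F) s →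
        (∃ v ∈ s, v ∈ {x : Fin m | ∀ e ∈ F, x ∉ e}) ∧
        (∃ v ∈ s, v ∉ {x : Fin m | ∀ e ∈ F, x ∉ e}) := by
  classical
  intro s hs
  obtain ⟨hcl, hmax⟩ := hs
  -- an untouched vertex is adjacent to every other vertex
  have hadj : ∀ r : Fin m, (∀ e ∈ F, r ∉ e) → ∀ x : Fin m, x ≠ r →
      ((⊤ : SimpleGraph (Fin m)).deleteEdges F).Adj r x := by
    intro r hr x hx
    rw [SimpleGraph.deleteEdges_adj]
    exact ⟨by simpa using hx.symm, fun hmem => hr _ hmem (by simp)⟩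
  -- R is nonempty by counting
  have hRne : ∃ r : Fin m, ∀ e ∈ F, r ∉ e := by
    by_contra h
    push_neg at h
    have hfin : F.Finite := Set.toFinite F
    have hsub : (Finset.univ : Finset (Fin m)) ⊆
        hfin.toFinset.biUnion (fun e => Finset.univ.filter (· ∈ e)) := by
      intro x _
      obtain ⟨e, heF, hxe⟩ := h x
      exact Finset.mem_biUnion.mpr ⟨e, hfin.mem_toFinset.mpr heF, by simp [hxe]⟩
    have h1 : m ≤ 2 * hfin.toFinset.card := by
      calc m = (Finset.univ : Finset (Fin m)).card := by simp
        _ ≤ (hfin.toFinset.biUnion (fun e => Finset.univ.filter (· ∈ e))).card :=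
            Finset.card_le_card hsub
        _ ≤ ∑ e ∈ hfin.toFinset, (Finset.univ.filter (· ∈ e)).card :=
            Finset.card_biUnion_le
        _ ≤ ∑ _e ∈ hfin.toFinset, 2 :=
            Finset.sum_le_sum (fun e _ => card_filter_mem_sym2 e)
        _ = 2 * hfin.toFinset.card := by rw [Finset.sum_const]; ring
    have h2 : hfin.toFinset.card = F.ncard := (Set.ncard_eq_toFinset_card F hfin).symm
    omega
  constructor
  · -- s contains an untouched vertex
    by_contra h
    push_neg at h
    simp only [Set.mem_setOf_eq] at h
    push_neg at h
    obtain ⟨r, hr⟩ := hRne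
    have hrs : r ∉ s := fun hrs => by
      obtain ⟨e, heF, hre⟩ := h r hrs
      exact hr e heF hre
    have hclique : ((⊤ : SimpleGraph (Fin m)).deleteEdges F).IsClique (insert r s) := by
      intro x hx y hy hxy
      rcases hx with rfl | hx
      · rcases hy with rfl | hy
        · exact absurd rfl hxy
        · exact hadj x hr y (fun hyx => hrs (hyx ▸ hy))
      · rcases hy with rfl | hy
        · exact ((hadj y hr x (fun hxy' => hrs (hxy' ▸ hx))).symm)
        · exact hcl hx hy hxy
    have := hmax _ hclique (Set.subset_insert r s)
    exact hrs (this ▸ Set.mem_insert r s)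
  · -- s contains a touched vertex
    by_contra h
    push_neg at h
    -- every vertex of s is untouched
    have hsub : ∀ x ∈ s, ∀ e ∈ F, x ∉ e := by
      intro x hx
      exact Set.mem_setOf.mp (h x hx)
    obtain ⟨e, heF⟩ := hne
    obtain ⟨a, ha⟩ : ∃ a : Fin m, a ∈ e := by
      induction e using Sym2.ind with
      | _ u v => exact ⟨u, by simp⟩
    have has : a ∉ s := fun has => hsub a has e heF ha
    have hclique : ((⊤ : SimpleGraph (Fin m)).deleteEdges F).IsClique (insert a s) := by
      intro x hx y hy hxy
      rcases hx with rfl | hx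
      · rcases hy with rfl | hy
        · exact absurd rfl hxy
        · exact ((hadj y (hsub y hy) x hxy).symm)
      · rcases hy with rfl | hy
        · exact hadj x (hsub x hx) y (Ne.symm hxy)
        · exact hcl hx hy hxy
    have := hmax _ hclique (Set.subset_insert a s)
    exact has (this ▸ Set.mem_insert a s)
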